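/- Let C be an abelian category and let (T, F) be a torsion pair in C. Then (Defl T, Defl F) is an epimorphism factorization system in C. -/

import Mathlib

open CategoryTheory CategoryTheory.Limits ZeroObject

namespace TorsionFS

variable {C : Type*} [Category C] [Abelian C]

/-- A torsion pair `(T, F)` in an abelian category. -/
structure IsTorsionPair (T F : Set C) : Prop where
  isoClosed_torsion : ∀ {X Y : C}, (X ≅ Y) → X ∈ T → Y ∈ T
  isoClosed_free : ∀ {X Y : C}, (X ≅ Y) → X ∈ F → Y ∈ F
  hom_zero : ∀ {X Y : C}, X ∈ T → Y ∈ F → ∀ f : X ⟶ Y, f = 0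
  exists_ses : ∀ X : C, ∃ (T' F' : C) (_ : T' ∈ T) (_ : F' ∈ F)
      (i : T' ⟶ X) (p : X ⟶ F') (w : i ≫ p = 0),
      (ShortComplex.mk i p w).ShortExact

/-- For epimorphisms `l`, `r`, `l ⊥ r` iff `Hom(ker l, ker r) = 0`. -/
def EpiPerp {A B X Y : C} (l : A ⟶ B) (r : X ⟶ Y) : Prop :=
  ∀ φ : kernel l ⟶ kernel r, φ = 0

/-- `Defl U`: epimorphisms whose kernel lies in `U`. -/
def Defl (U : Set C) : MorphismProperty C :=
  fun _ _ f => Epi f ∧ kernel f ∈ U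

/-- `Ker L`: objects isomorphic to the kernel of some morphism in `L`. -/
def KerClass (L : MorphismProperty C) : Set C :=
  {Z | ∃ (X Y : C) (f : X ⟶ Y), L f ∧ Nonempty (Z ≅ kernel f)}

/-- An epimorphism factorization system `(L, R)` in an abelian category. -/
structure IsEpiFactorizationSystem (L R : MorphismProperty C) : Prop where
  epi_of_L : ∀ {X Y : C} (f : X ⟶ Y), L f → Epi f
  epi_of_R : ∀ {X Y : C} (f : X ⟶ Y), R f → Epi f
  factor : ∀ {X Y : C} (f : X ⟶ Y), Epi f →
    ∃ (K : C) (l : X ⟶ K) (r : K ⟶ Y), L l ∧ R r ∧ l ≫ r = f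
  left_eq : ∀ {X Y : C} (f : X ⟶ Y),
    L f ↔ (Epi f ∧ ∀ {Z W : C} (g : Z ⟶ W), R g → EpiPerp f g)
  right_eq : ∀ {Z W : C} (g : Z ⟶ W),
    R g ↔ (Epi g ∧ ∀ {X Y : C} (f : X ⟶ Y), L f → EpiPerp f g)

section Aux

attribute [local instance] CategoryTheory.Abelian.Pseudoelement.objectToSort
  CategoryTheory.Abelian.Pseudoelement.homToFun

open CategoryTheory.Abelian CategoryTheory.Abelian.Pseudoelement

/-- Any object of `U` is the kernel of a morphism in `Defl U`. -/
lemma defl_zero_to_zero {U : Set C} {A : C} (hA : A ∈ U)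
    (hiso : ∀ {X Y : C}, (X ≅ Y) → X ∈ U → Y ∈ U) :
    Defl U (0 : A ⟶ (0 : C)) := by
  refine ⟨⟨fun g h _ => (isZero_zero C).eq_of_src g h⟩, ?_⟩
  exact hiso (kernelZeroIsoSource (X := A) (Y := (0 : C))).symm hA

/-- If `K` admits no nonzero map to any object of `F`, then `K ∈ T`. -/
lemma mem_torsion_of_hom_zero {T F : Set C} (h : IsTorsionPair T F) (K : C)
    (hK : ∀ (F' : C), F' ∈ F → ∀ ψ : K ⟶ F', ψ = 0) : K ∈ T := by
  obtain ⟨T', F', hT', hF', i, p, w, hS⟩ := h.exists_ses K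
  haveI := hS.mono_f
  haveI := hS.epi_g
  have hp : p = 0 := hK F' hF' p
  have hzF : IsZero F' := by
    rw [IsZero.iff_id_eq_zero, ← cancel_epi p]
    simp [hp]
  have hzc : IsZero (cokernel i) :=
    IsZero.of_iso hzF
      (IsColimit.coconePointUniqueUpToIso (cokernelIsCokernel i) hS.exact.gIsCokernel)
  haveI : Epi i := Abelian.epi_of_cokernel_π_eq_zero i (hzc.eq_of_tgt _ _)
  haveI : IsIso i := isIso_of_mono_of_epi i
  exact h.isoClosed_torsion (asIso i) hT'

/-- If `K` admits no nonzero map from any object of `T`, then `K ∈ F`. -/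
lemma mem_free_of_hom_zero {T F : Set C} (h : IsTorsionPair T F) (K : C)
    (hK : ∀ (T' : C), T' ∈ T → ∀ ψ : T' ⟶ K, ψ = 0) : K ∈ F := by
  obtain ⟨T', F', hT', hF', i, p, w, hS⟩ := h.exists_ses K
  haveI := hS.mono_f
  haveI := hS.epi_g
  have hi : i = 0 := hK T' hT' i
  have hzT : IsZero T' := by
    rw [IsZero.iff_id_eq_zero, ← cancel_mono i]
    simp [hi]
  have hzk : IsZero (kernel p) :=
    IsZero.of_iso hzT
      (IsLimit.conePointUniqueUpToIso (kernelIsKernel p) hS.exact.fIsKernel)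
  haveI : Mono p := Abelian.mono_of_kernel_ι_eq_zero p (hzk.eq_of_src _ _)
  haveI : IsIso p := isIso_of_mono_of_epi p
  exact h.isoClosed_free (asIso p).symm hF'

/-- The factorization step. -/
lemma factor_aux {T F : Set C} (h : IsTorsionPair T F) {X Y : C} (f : X ⟶ Y) (hf : Epi f) :
    ∃ (K : C) (l : X ⟶ K) (r : K ⟶ Y), Defl T l ∧ Defl F r ∧ l ≫ r = f := by
  obtain ⟨T', F', hT', hF', i, p, w, hS⟩ := h.exists_ses (kernel f)
  haveI := hS.mono_f
  haveI := hS.epi_g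
  set j : kernel f ⟶ X := kernel.ι f with hj
  set m : T' ⟶ X := i ≫ j with hm
  haveI : Mono m := mono_comp i j
  have hmf : m ≫ f = 0 := by
    rw [hm, Category.assoc, hj, kernel.condition, comp_zero]
  set l : X ⟶ cokernel m := cokernel.π m with hl
  set r : cokernel m ⟶ Y := cokernel.desc m f hmf with hr
  have hlr : l ≫ r = f := cokernel.π_desc m f hmf
  haveI : Epi f := hf
  haveI hepir : Epi r := epi_of_epi_fac hlr
  -- the short exact sequence T' → X → cokernel m
  set Sl : ShortComplex C := ShortComplex.mk m l (cokernel.condition m) with hSl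
  haveI : Mono Sl.f := ‹Mono m›
  haveI : Epi Sl.g := by
    show Epi (cokernel.π m); infer_instance
  have hSlex : Sl.Exact := Sl.exact_of_g_is_cokernel (cokernelIsCokernel m)
  -- kernel of l is T'
  have eT : T' ≅ kernel l :=
    IsLimit.conePointUniqueUpToIso hSlex.fIsKernel (limit.isLimit _)
  -- the map χ : F' → cokernel m
  have hiw : i ≫ (j ≫ l) = 0 := by
    rw [← Category.assoc, ← hm, hl, cokernel.condition]
  set χ : F' ⟶ cokernel m := hS.exact.desc (j ≫ l) hiw with hχ
  have hpχ : p ≫ χ = j ≫ l := hS.exact.g_desc (j ≫ l) hiw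
  have hχr : χ ≫ r = 0 := by
    rw [← cancel_epi p, ← Category.assoc, hpχ, Category.assoc, hlr,
      hj, kernel.condition, comp_zero]
  -- the kernel short complex of f
  set Sk : ShortComplex C := ShortComplex.mk j f (kernel.condition f) with hSk
  have hSkex : Sk.Exact := Sk.exact_of_f_is_kernel (kernelIsKernel f)
  -- χ is a mono (pseudoelement chase)
  haveI hmonoχ : Mono χ := by
    apply mono_of_zero_of_map_zero
    intro a ha
    obtain ⟨k, hk⟩ := pseudo_surjective_of_epi p a
    have h1 : (l : X ⟶ cokernel m) ((j : kernel f ⟶ X) k) = 0 := by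
      rw [← Abelian.Pseudoelement.comp_apply, ← hpχ, Abelian.Pseudoelement.comp_apply, hk]
      exact ha
    obtain ⟨t, ht⟩ := pseudo_exact_of_exact hSlex _ h1
    have ht' : (j : kernel f ⟶ X) ((i : T' ⟶ kernel f) t) = (j : kernel f ⟶ X) k := by
      rw [← Abelian.Pseudoelement.comp_apply]; exact ht
    have hit : (i : T' ⟶ kernel f) t = k := pseudo_injective_of_mono j ht'
    rw [← hk, ← hit, ← Abelian.Pseudoelement.comp_apply, w, Abelian.Pseudoelement.zero_apply]
  -- exactness of F' → cokernel m → Y (pseudoelement chase)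
  have hSrex : (ShortComplex.mk χ r hχr).Exact := by
    apply exact_of_pseudo_exact
    intro b hb
    obtain ⟨x, hx⟩ := pseudo_surjective_of_epi l b
    have hfx : (f : X ⟶ Y) x = 0 := by
      rw [← hlr, Abelian.Pseudoelement.comp_apply, hx]; exact hb
    obtain ⟨k, hk⟩ := pseudo_exact_of_exact hSkex _ hfx
    refine ⟨(p : kernel f ⟶ F') k, ?_⟩
    show (χ : F' ⟶ cokernel m) ((p : kernel f ⟶ F') k) = b
    rw [← Abelian.Pseudoelement.comp_apply, hpχ, Abelian.Pseudoelement.comp_apply, hk, hx]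
  haveI : Mono (ShortComplex.mk χ r hχr).f := hmonoχ
  haveI : Epi (ShortComplex.mk χ r hχr).g := hepir
  have eF : F' ≅ kernel r :=
    IsLimit.conePointUniqueUpToIso hSrex.fIsKernel (limit.isLimit _)
  refine ⟨cokernel m, l, r, ⟨?_, h.isoClosed_torsion eT hT'⟩,
    ⟨hepir, h.isoClosed_free eF hF'⟩, hlr⟩
  show Epi (cokernel.π m); infer_instance

end Aux

/-- if `(T, F)` is a torsion pair in an abelian category `C`, then
`(Defl T, Defl F)` is an epimorphism factorization system in `C`. -/
theorem torsionPair_defl_isEpiFactorizationSystem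
    (T F : Set C) (h : IsTorsionPair T F) :
    IsEpiFactorizationSystem (Defl T) (Defl F) := by
  constructor
  · exact fun f hf => hf.1
  · exact fun f hf => hf.1
  · exact fun f hf => factor_aux h f hf
  · intro X Y f
    constructor
    · rintro ⟨hf, hT⟩
      refine ⟨hf, fun g hg φ => h.hom_zero hT hg.2 φ⟩
    · rintro ⟨hf, hperp⟩
      refine ⟨hf, mem_torsion_of_hom_zero h _ ?_⟩
      intro F' hF' ψ
      have hg := defl_zero_to_zero (C := C) hF' (fun e he => h.isoClosed_free e he)
      have hφ := hperp _ hg (ψ ≫ (kernelZeroIsoSource (X := F') (Y := (0 : C))).inv)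
      have : ψ = (ψ ≫ (kernelZeroIsoSource (X := F') (Y := (0 : C))).inv) ≫
          (kernelZeroIsoSource (X := F') (Y := (0 : C))).hom := by simp
      rw [this, hφ, zero_comp]
  · intro Z W g
    constructor
    · rintro ⟨hg, hF⟩
      refine ⟨hg, fun f hf φ => h.hom_zero hf.2 hF φ⟩
    · rintro ⟨hg, hperp⟩
      refine ⟨hg, mem_free_of_hom_zero h _ ?_⟩
      intro T' hT' ψ
      have hfT := defl_zero_to_zero (C := C) hT' (fun e he => h.isoClosed_torsion e he)
      have hφ := hperp _ hfT ((kernelZeroIsoSource (X := T') (Y := (0 : C))).hom ≫ ψ)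
      have : ψ = (kernelZeroIsoSource (X := T') (Y := (0 : C))).inv ≫
          ((kernelZeroIsoSource (X := T') (Y := (0 : C))).hom ≫ ψ) := by simp
      rw [this, hφ, comp_zero]
end TorsionFS
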